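/- Irrational rotation numbers are attained at a single parameter: if θ₁, θ₂ ∈ ℝ satisfy ρ(θ₁) = ρ(θ₂) and this common value is irrational, then θ₁ = θ₂. Equivalently, for every irrational t the fiber ρ^{-1}(t) is a single point. -/

import Mathlib

open Filter Set


/-- The Arnold (standard) map lift restricted to the real line:
`A_θ(x) = x + θ + sin(2πx)/(2π)`. -/
noncomputable def arnoldR (θ : ℝ) (x : ℝ) : ℝ :=
  x + θ + Real.sin (2 * Real.pi * x) / (2 * Real.pi)

lemma arnoldR_hasDerivAt (θ x : ℝ) :
    HasDerivAt (arnoldR θ) (1 + Real.cos (2 * Real.pi * x)) x := by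
  have h2π : (2 * Real.pi) ≠ 0 := by positivity
  have h1 : HasDerivAt (fun y : ℝ => 2 * Real.pi * y) (2 * Real.pi) x := by
    simpa using (hasDerivAt_id x).const_mul (2 * Real.pi)
  have h2 : HasDerivAt (fun y : ℝ => Real.sin (2 * Real.pi * y))
      (Real.cos (2 * Real.pi * x) * (2 * Real.pi)) x :=
    (Real.hasDerivAt_sin (2 * Real.pi * x)).comp x h1
  have h3 : HasDerivAt (fun y : ℝ => Real.sin (2 * Real.pi * y) / (2 * Real.pi))
      (Real.cos (2 * Real.pi * x)) x := by
    have := h2.div_const (2 * Real.pi)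
    simpa [mul_div_assoc, mul_div_cancel_right₀ _ h2π] using this
  have h4 : HasDerivAt (fun y : ℝ => y + θ) 1 x := by
    simpa using (hasDerivAt_id x).add_const θ
  exact h4.add h3

lemma arnoldR_monotone (θ : ℝ) : Monotone (arnoldR θ) := by
  have hd : Differentiable ℝ (arnoldR θ) := fun x => (arnoldR_hasDerivAt θ x).differentiableAt
  apply monotone_of_deriv_nonneg hd
  intro x
  rw [(arnoldR_hasDerivAt θ x).deriv]
  nlinarith [Real.neg_one_le_cos (2 * Real.pi * x)]

lemma arnoldR_add_one (θ x : ℝ) : arnoldR θ (x + 1) = arnoldR θ x + 1 := by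
  unfold arnoldR
  have : 2 * Real.pi * (x + 1) = 2*Real.pi*x + 2*Real.pi := by ring
  rw [this, Real.sin_add_two_pi]; ring

/-- The Arnold map as a `CircleDeg1Lift`. -/
noncomputable def arnoldLift (θ : ℝ) : CircleDeg1Lift :=
  ⟨⟨arnoldR θ, arnoldR_monotone θ⟩, arnoldR_add_one θ⟩

@[simp] lemma arnoldLift_coe (θ : ℝ) : ⇑(arnoldLift θ) = arnoldR θ := rfl

lemma arnoldR_continuous (θ : ℝ) : Continuous (arnoldR θ) := by
  unfold arnoldR; fun_prop

lemma rho_eq_tau (ρ : ℝ → ℝ)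
    (hρ : ∀ θ x : ℝ,
      Filter.Tendsto (fun n : ℕ => (arnoldR θ)^[n] x / n) Filter.atTop (nhds (ρ θ)))
    (θ : ℝ) : ρ θ = CircleDeg1Lift.translationNumber (arnoldLift θ) := by
  refine tendsto_nhds_unique (hρ θ 0) ?_
  refine (arnoldLift θ).tendsto_translation_number₀.congr fun n => ?_
  rw [CircleDeg1Lift.coe_pow, arnoldLift_coe]

lemma arnoldR_le (θ x : ℝ) : arnoldR θ x ≤ x + (θ + 1) := by
  have hπ : (1:ℝ) ≤ 2 * Real.pi := by nlinarith [Real.pi_gt_three]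
  have h1 : Real.sin (2*Real.pi*x) / (2*Real.pi) ≤ 1 := by
    rw [div_le_one (by positivity)]
    exact (Real.sin_le_one _).trans hπ
  unfold arnoldR; linarith

lemma le_arnoldR (θ x : ℝ) : x + (θ - 1) ≤ arnoldR θ x := by
  have hπ : (1:ℝ) ≤ 2 * Real.pi := by nlinarith [Real.pi_gt_three]
  have h1 : (-1:ℝ) ≤ Real.sin (2*Real.pi*x) / (2*Real.pi) := by
    rw [le_div_iff₀ (by positivity)]
    nlinarith [Real.neg_one_le_sin (2*Real.pi*x)]
  unfold arnoldR; linarith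

lemma tau_le (θ : ℝ) : CircleDeg1Lift.translationNumber (arnoldLift θ) ≤ θ + 1 :=
  CircleDeg1Lift.translationNumber_le_of_le_add _ (fun x => arnoldR_le θ x)

lemma le_tau (θ : ℝ) : θ - 1 ≤ CircleDeg1Lift.translationNumber (arnoldLift θ) :=
  CircleDeg1Lift.le_translationNumber_of_add_le _ (fun x => le_arnoldR θ x)

lemma iter_shift (θ ε : ℝ) (hε : 0 ≤ ε) (q : ℕ) (hq : 0 < q) (x : ℝ) :
    (arnoldR θ)^[q] x + ε ≤ (arnoldR (θ + ε))^[q] x := by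
  induction q with
  | zero => omega
  | succ n ih =>
    rcases Nat.eq_zero_or_pos n with rfl | hn
    · simp [arnoldR]; linarith
    · rw [Function.iterate_succ_apply', Function.iterate_succ_apply']
      calc arnoldR θ ((arnoldR θ)^[n] x) + ε
          = arnoldR (θ + ε) ((arnoldR θ)^[n] x) := by unfold arnoldR; ring
        _ ≤ arnoldR (θ + ε) ((arnoldR θ)^[n] x + ε) :=
            arnoldR_monotone _ (by linarith)
        _ ≤ arnoldR (θ + ε) ((arnoldR (θ + ε))^[n] x) :=
            arnoldR_monotone _ (ih hn)

lemma cont_iter (q : ℕ) (x : ℝ) : Continuous fun θ : ℝ => (arnoldR θ)^[q] x := by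
  induction q with
  | zero => simpa using continuous_const
  | succ n ih =>
    have h2 : Continuous fun p : ℝ × ℝ => arnoldR p.1 p.2 := by
      unfold arnoldR; fun_prop
    simp only [Function.iterate_succ_apply']
    exact h2.comp (continuous_id.prodMk ih)

/-- The subgroup `ℤ + ℤt` of `ℝ`. -/
def zSubgroup (t : ℝ) : AddSubgroup ℝ where
  carrier := {x | ∃ m n : ℤ, x = (m : ℝ) + n * t}
  zero_mem' := ⟨0, 0, by simp⟩
  add_mem' := by
    rintro a b ⟨m, n, rfl⟩ ⟨m', n', rfl⟩
    exact ⟨m + m', n + n', by push_cast; ring⟩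
  neg_mem' := by
    rintro a ⟨m, n, rfl⟩
    exact ⟨-m, -n, by push_cast; ring⟩

lemma zSubgroup_dense {t : ℝ} (ht : Irrational t) : Dense (zSubgroup t : Set ℝ) := by
  rcases (zSubgroup t).dense_or_cyclic with h | ⟨a, ha⟩
  · exact h
  · exfalso
    have h1 : (1 : ℝ) ∈ zSubgroup t := ⟨1, 0, by simp⟩
    have h2 : t ∈ zSubgroup t := ⟨0, 1, by simp⟩
    rw [ha, AddSubgroup.mem_closure_singleton] at h1 h2
    obtain ⟨k, hk⟩ := h1
    obtain ⟨l, hl⟩ := h2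
    rw [zsmul_eq_mul] at hk hl
    have hk0 : (k : ℝ) ≠ 0 := by
      intro h; rw [h, zero_mul] at hk; norm_num at hk
    have hTk : t * (k:ℝ) = l := by
      rw [← hl, mul_assoc, mul_comm a ((k:ℝ)), hk, mul_one]
    have hT : t = (l : ℝ) / k := by
      field_simp
      linarith [hTk]
    exact ht ⟨(l : ℚ)/k, by rw [hT]; push_cast; ring⟩

lemma exists_fract_near_one {t : ℝ} (ht : Irrational t) {ε : ℝ} (hε : 0 < ε) (hε1 : ε ≤ 1) :
    ∃ (q : ℕ) (p : ℤ), 0 < q ∧ (p : ℝ) + 1 - ε < q * t ∧ (q : ℝ) * t < p + 1 := by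
  obtain ⟨s, hsS, hs⟩ := (zSubgroup_dense ht).exists_mem_open isOpen_Ioo
    (nonempty_Ioo.2 (by linarith : (1:ℝ) - ε < 1))
  obtain ⟨m, n, rfl⟩ := hsS
  obtain ⟨hs1, hs2⟩ := hs
  have hn : n ≠ 0 := by
    rintro rfl
    simp only [Int.cast_zero, zero_mul, add_zero] at hs1 hs2
    have h0 : (0 : ℝ) < (m:ℝ) := by linarith
    have h1 : (1:ℤ) ≤ m := by exact_mod_cast h0
    have h2 : (1:ℝ) ≤ (m:ℝ) := by exact_mod_cast h1
    linarith
  rcases hn.lt_or_gt with hneg | hpos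
  · obtain ⟨q₀, hq₀pos, hq₀⟩ : ∃ q₀ : ℕ, 0 < q₀ ∧ ((q₀ : ℝ)) = -(n : ℝ) := by
      refine ⟨(-n).toNat, by omega, ?_⟩
      have h := Int.toNat_of_nonneg (by omega : (0:ℤ) ≤ -n)
      exact_mod_cast congrArg (Int.cast : ℤ → ℝ) h
    set α : ℝ := 1 - ((m : ℝ) + n * t) with hα
    have hα0 : 0 < α := by rw [hα]; linarith
    have hαε : α < ε := by rw [hα]; linarith
    have hq₀t : (q₀ : ℝ) * t = ((m : ℝ) - 1) + α := by rw [hq₀, hα]; ring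
    obtain ⟨k, hkpos, hk1, hk2⟩ :
        ∃ k : ℕ, 0 < k ∧ 1 - ε < (k:ℝ) * α ∧ (k:ℝ) * α < 1 := by
      refine ⟨⌊(1 - ε) / α⌋₊ + 1, Nat.succ_pos _, ?_, ?_⟩
      · have h := Nat.lt_floor_add_one ((1 - ε) / α)
        have h2 : (1-ε)/α * α = 1 - ε := by field_simp
        push_cast
        nlinarith
      · have h1 : (⌊(1 - ε) / α⌋₊ : ℝ) ≤ (1 - ε)/α :=
          Nat.floor_le (div_nonneg (by linarith) hα0.le)
        have h2 : (1-ε)/α * α = 1 - ε := by field_simp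
        push_cast
        nlinarith
    have hkey : ((k * q₀ : ℕ) : ℝ) * t = ((k * (m - 1) : ℤ) : ℝ) + (k:ℝ) * α := by
      push_cast
      rw [mul_assoc, hq₀t]; ring
    refine ⟨k * q₀, k * (m - 1), Nat.mul_pos hkpos hq₀pos, ?_, ?_⟩
    · rw [hkey]; linarith
    · rw [hkey]; linarith
  · have hcast : ((n.toNat : ℕ) : ℝ) = (n : ℝ) := by
      have h := Int.toNat_of_nonneg (by omega : (0:ℤ) ≤ n)
      exact_mod_cast congrArg (Int.cast : ℤ → ℝ) h
    refine ⟨n.toNat, -m, by omega, ?_, ?_⟩ <;>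
      · rw [hcast]; push_cast; linarith

/-- Strict monotonicity of the rotation number at irrational values. -/
lemma tau_injective_irrational {θ₁ θ₂ : ℝ} (hlt : θ₁ < θ₂)
    (hirr : Irrational (CircleDeg1Lift.translationNumber (arnoldLift θ₁)))
    (heq : CircleDeg1Lift.translationNumber (arnoldLift θ₁) =
      CircleDeg1Lift.translationNumber (arnoldLift θ₂)) : False := by
  set t := CircleDeg1Lift.translationNumber (arnoldLift θ₁) with hT
  set ε : ℝ := min (θ₂ - θ₁) 1 with hεdef
  have hε : 0 < ε := lt_min (by linarith) one_pos
  have hε1 : ε ≤ 1 := min_le_right _ _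
  have hεle : ε ≤ θ₂ - θ₁ := min_le_left _ _
  obtain ⟨q, p, hq, h1, h2⟩ := exists_fract_near_one hirr hε hε1
  -- translation numbers of the q-th iterates
  have ht1 : CircleDeg1Lift.translationNumber ((arnoldLift θ₁) ^ q) = q * t := by
    rw [CircleDeg1Lift.translationNumber_pow]
  have ht2 : CircleDeg1Lift.translationNumber ((arnoldLift θ₂) ^ q) = q * t := by
    rw [CircleDeg1Lift.translationNumber_pow, ← heq]
  -- a point realizing the translation number of the iterate of the first map
  obtain ⟨x₀, hx₀⟩ := ((arnoldLift θ₁) ^ q).exists_eq_add_translationNumber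
    (((arnoldLift θ₁).continuous_pow (by simpa using arnoldR_continuous θ₁) q).congr
      (fun x => rfl))
  rw [ht1] at hx₀
  -- the second map at x₀ is below x₀ + p + 1
  have hlt2 : ((arnoldLift θ₂) ^ q) x₀ < x₀ + ((p + 1 : ℤ) : ℝ) :=
    CircleDeg1Lift.map_lt_of_translationNumber_lt_int _ (by rw [ht2]; push_cast; linarith) x₀
  -- but it is above x₀ + q t + ε
  have hshift : ((arnoldLift θ₁) ^ q) x₀ + (θ₂ - θ₁) ≤ ((arnoldLift θ₂) ^ q) x₀ := by
    have := iter_shift θ₁ (θ₂ - θ₁) (by linarith) q hq x₀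
    rw [show θ₁ + (θ₂ - θ₁) = θ₂ by ring] at this
    simpa [CircleDeg1Lift.coe_pow] using this
  rw [hx₀] at hshift
  push_cast at hlt2
  linarith

/-- Surjectivity of the rotation number map. -/
lemma exists_tau_eq (t : ℝ) :
    ∃ θ : ℝ, CircleDeg1Lift.translationNumber (arnoldLift θ) = t := by
  set h : ℝ → ℝ := fun θ => CircleDeg1Lift.translationNumber (arnoldLift θ) with hh
  set S : Set ℝ := {θ | h θ < t} with hS
  have hne : (t - 2) ∈ S := by
    have := tau_le (t - 2)
    simp only [hS, mem_setOf_eq, hh]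
    linarith
  have hbdd : BddAbove S := by
    refine ⟨t + 1, fun θ hθ => ?_⟩
    have h1 := le_tau θ
    have h2 : h θ < t := hθ
    simp only [hh] at h2
    linarith
  set θs : ℝ := sSup S with hθs
  have hcont : ∀ θ : ℝ, Continuous ⇑(arnoldLift θ) := fun θ => by
    simpa using arnoldR_continuous θ
  refine ⟨θs, ?_⟩
  rcases lt_trichotomy (h θs) t with hc | hc | hc
  · -- h θs < t : find θ > θs still in S, contradiction
    exfalso
    obtain ⟨r, hr1, hr2⟩ := exists_rat_btwn hc
    have hqpos : (0:ℝ) < (r.den : ℝ) := by exact_mod_cast r.pos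
    have hr : (r : ℝ) = (r.num : ℝ) / (r.den : ℝ) := by exact_mod_cast (Rat.num_div_den r).symm
    have htau : CircleDeg1Lift.translationNumber ((arnoldLift θs) ^ r.den) < r.num := by
      rw [CircleDeg1Lift.translationNumber_pow]
      have : h θs * r.den < (r:ℝ) * r.den := by
        apply mul_lt_mul_of_pos_right hr1 hqpos
      rw [hr] at this
      rw [div_mul_cancel₀ _ (ne_of_gt hqpos)] at this
      linarith [this]
    have hpt : ((arnoldLift θs) ^ r.den) 0 < 0 + (r.num : ℝ) :=
      CircleDeg1Lift.map_lt_of_translationNumber_lt_int _ htau 0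
    have hpt' : (arnoldR θs)^[r.den] 0 < (r.num : ℝ) := by
      rw [← zero_add ((r.num : ℝ))]
      simpa [CircleDeg1Lift.coe_pow] using hpt
    have hopen : IsOpen {θ : ℝ | (arnoldR θ)^[r.den] 0 < (r.num : ℝ)} :=
      isOpen_lt (cont_iter r.den 0) continuous_const
    obtain ⟨δ, hδ, hball⟩ := Metric.isOpen_iff.1 hopen θs hpt'
    have hmem : (θs + δ/2) ∈ Metric.ball θs δ := by
      rw [Metric.mem_ball, Real.dist_eq, show θs + δ/2 - θs = δ/2 by ring,
        abs_of_pos (by linarith)]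
      linarith
    have hθU : (arnoldR (θs + δ/2))^[r.den] 0 < (r.num : ℝ) := hball hmem
    have hθS : (θs + δ/2) ∈ S := by
      have hle : ((arnoldLift (θs + δ/2)) ^ r.den) 0 ≤ 0 + (r.num : ℝ) := by
        simp only [CircleDeg1Lift.coe_pow, arnoldLift_coe, zero_add]
        exact hθU.le
      have := CircleDeg1Lift.translationNumber_le_of_le_add_int _ hle
      rw [CircleDeg1Lift.translationNumber_pow] at this
      have hle2 : h (θs + δ/2) ≤ (r.num : ℝ) / (r.den : ℝ) := by
        rw [le_div_iff₀ hqpos]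
        linarith [this]
      simp only [hS, mem_setOf_eq]
      calc h (θs + δ/2) ≤ (r.num : ℝ) / (r.den : ℝ) := hle2
        _ = (r : ℝ) := hr.symm
        _ < t := hr2
    have := le_csSup hbdd hθS
    rw [← hθs] at this
    linarith
  · exact hc
  · -- t < h θs : points of S near θs have h ≥ r > t, contradiction
    exfalso
    obtain ⟨r, hr1, hr2⟩ := exists_rat_btwn hc
    have hqpos : (0:ℝ) < (r.den : ℝ) := by exact_mod_cast r.pos
    have hr : (r : ℝ) = (r.num : ℝ) / (r.den : ℝ) := by exact_mod_cast (Rat.num_div_den r).symm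
    have htau : (r.num : ℝ) < CircleDeg1Lift.translationNumber ((arnoldLift θs) ^ r.den) := by
      rw [CircleDeg1Lift.translationNumber_pow]
      have : (r:ℝ) * r.den < h θs * r.den := mul_lt_mul_of_pos_right hr2 hqpos
      rw [hr, div_mul_cancel₀ _ (ne_of_gt hqpos)] at this
      linarith [this]
    obtain ⟨x₀, hx₀⟩ : ∃ x₀ : ℝ, x₀ + (r.num : ℝ) < ((arnoldLift θs) ^ r.den) x₀ := by
      by_contra hcon
      push_neg at hcon
      have : CircleDeg1Lift.translationNumber ((arnoldLift θs) ^ r.den) ≤ (r.num : ℝ) :=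
        CircleDeg1Lift.translationNumber_le_of_le_add_int _
          (by exact_mod_cast hcon 0 : ((arnoldLift θs) ^ r.den) 0 ≤ 0 + ((r.num : ℤ) : ℝ))
      linarith
    have hx₀' : x₀ + (r.num : ℝ) < (arnoldR θs)^[r.den] x₀ := by
      simpa [CircleDeg1Lift.coe_pow] using hx₀
    have hopen : IsOpen {θ : ℝ | x₀ + (r.num : ℝ) < (arnoldR θ)^[r.den] x₀} :=
      isOpen_lt continuous_const (cont_iter r.den x₀)
    obtain ⟨δ, hδ, hball⟩ := Metric.isOpen_iff.1 hopen θs hx₀'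
    obtain ⟨θ, hθS, hθlt⟩ := exists_lt_of_lt_csSup ⟨_, hne⟩
      (by linarith : θs - δ < sSup S)
    have hθle : θ ≤ θs := le_csSup hbdd hθS
    have hmem : θ ∈ Metric.ball θs δ := by
      simp [Real.dist_eq, abs_lt]
      constructor <;> linarith
    have hθU : x₀ + (r.num : ℝ) < (arnoldR θ)^[r.den] x₀ := hball hmem
    have hge : (r.num : ℝ) ≤ CircleDeg1Lift.translationNumber ((arnoldLift θ) ^ r.den) := by
      apply CircleDeg1Lift.le_translationNumber_of_add_int_le
      show x₀ + ((r.num : ℤ) : ℝ) ≤ ((arnoldLift θ) ^ r.den) x₀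
      simpa [CircleDeg1Lift.coe_pow] using hθU.le
    rw [CircleDeg1Lift.translationNumber_pow] at hge
    have : (r : ℝ) ≤ h θ := by
      rw [hr, div_le_iff₀ hqpos]
      linarith [hge]
    have hθt : h θ < t := hθS
    linarith

/-- Irrational rotation numbers are attained at a single parameter: if
`ρ(θ₁) = ρ(θ₂)` is irrational then `θ₁ = θ₂`; equivalently, for every irrational `t`
the fiber `ρ⁻¹(t)` is a single point. -/
theorem arnold_irrational_fiber_is_point (ρ : ℝ → ℝ)
    (hρ : ∀ θ x : ℝ,
      Filter.Tendsto (fun n : ℕ => (arnoldR θ)^[n] x / n) Filter.atTop (nhds (ρ θ))) :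
    (∀ θ₁ θ₂ : ℝ, ρ θ₁ = ρ θ₂ → Irrational (ρ θ₁) → θ₁ = θ₂) ∧
    (∀ t : ℝ, Irrational t → ∃! θ : ℝ, ρ θ = t) := by
  have hRT : ∀ θ : ℝ, ρ θ = CircleDeg1Lift.translationNumber (arnoldLift θ) :=
    rho_eq_tau ρ hρ
  have huniq : ∀ θ₁ θ₂ : ℝ, ρ θ₁ = ρ θ₂ → Irrational (ρ θ₁) → θ₁ = θ₂ := by
    intro θ₁ θ₂ heq hirr
    rcases lt_trichotomy θ₁ θ₂ with hlt | heq' | hlt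
    · exfalso
      refine tau_injective_irrational hlt ?_ ?_
      · rw [← hRT θ₁]; exact hirr
      · rw [← hRT θ₁, ← hRT θ₂]; exact heq
    · exact heq'
    · exfalso
      refine tau_injective_irrational hlt ?_ ?_
      · rw [← hRT θ₂, ← heq]; exact hirr
      · rw [← hRT θ₁, ← hRT θ₂]; exact heq.symm
  refine ⟨huniq, fun t ht => ?_⟩
  obtain ⟨θ, hθ⟩ := exists_tau_eq t
  have hρθ : ρ θ = t := by rw [hRT θ]; exact hθ
  exact ⟨θ, hρθ, fun y hy => huniq y θ (by rw [hy, hρθ]) (by rwa [hy])⟩
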